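/- Let m+n be even, let A be a skew-symmetric matrix indexed by the ordered set V = (v₁,...,v_{m+n}), partitioned into disjoint subsets A₀ = (v_{i₁},...,v_{i_m}) and B = (v_{j₁},...,v_{j_n}) with m < n. Then Pf(V) = −∑_{X ⊊ B} (−1)^{Σ(B\X, V)} · Pf(A₀ ∪ X) · Pf(B \ X), the sum running over all proper subsets X of B. -/

import Mathlib

open Finset

/-- An (ordered) matching on `Fin n`: a set of arcs `(i,j)` with `i < j`,
pairwise vertex-disjoint. -/
def IsMatching {n : ℕ} (μ : Finset (Fin n × Fin n)) : Prop :=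
  (∀ p ∈ μ, p.1 < p.2) ∧
    ∀ p ∈ μ, ∀ q ∈ μ, p ≠ q → ({p.1, p.2} ∩ {q.1, q.2} : Finset (Fin n)) = ∅

/-- The set of vertices covered by a matching. -/
def cover {n : ℕ} (μ : Finset (Fin n × Fin n)) : Finset (Fin n) :=
  μ.biUnion fun p => {p.1, p.2}

/-- The number of crossings of a matching: pairs of arcs `{a,c}`, `{b,d}` with
`a < b < c < d`. -/
def crossings {n : ℕ} (μ : Finset (Fin n × Fin n)) : ℕ :=
  ((μ ×ˢ μ).filter fun pq => pq.1.1 < pq.2.1 ∧ pq.2.1 < pq.1.2 ∧ pq.1.2 < pq.2.2).card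

open scoped Classical in
/-- The Pfaffian of the principal submatrix of a skew-symmetric matrix `A`
indexed by the subset `S` (with the inherited order), defined as the signed sum
over perfect matchings of `S`.  `mpf A ∅ = 1` and `mpf A S = 0` for `|S|` odd. -/
noncomputable def mpf {n : ℕ} {R : Type*} [CommRing R]
    (A : Matrix (Fin n) (Fin n) R) (S : Finset (Fin n)) : R :=
  ∑ μ ∈ Finset.univ.filter
      (fun μ : Finset (Fin n × Fin n) => IsMatching μ ∧ cover μ = S),
    (-1 : R) ^ crossings μ * ∏ p ∈ μ, A p.1 p.2

/-- Symmetric difference of finite sets. -/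
def sd {n : ℕ} (X Y : Finset (Fin n)) : Finset (Fin n) := (X ∪ Y) \ (X ∩ Y)

/-- `posSum M Y = Σ(Y,M)`: the sum over `y ∈ Y` of the (1-based) position of `y`
in the increasing enumeration of `M`. -/
def posSum {n : ℕ} (M Y : Finset (Fin n)) : ℕ :=
  ∑ y ∈ Y, (M.filter fun z => z ≤ y).card

section Aux
variable {N : ℕ}

/-- cross predicate -/
def cross {N : ℕ} (p q : Fin N × Fin N) : Prop :=
  p.1 < q.1 ∧ q.1 < p.2 ∧ p.2 < q.2

lemma mem_cover {μ : Finset (Fin N × Fin N)} {v : Fin N} :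
    v ∈ cover μ ↔ ∃ p ∈ μ, v = p.1 ∨ v = p.2 := by
  simp [cover]

lemma cover_union (μ ν : Finset (Fin N × Fin N)) :
    cover (μ ∪ ν) = cover μ ∪ cover ν := by
  ext v; simp only [cover, mem_biUnion, mem_union]; aesop

lemma cover_insert (e : Fin N × Fin N) (μ : Finset (Fin N × Fin N)) :
    cover (insert e μ) = insert e.1 (insert e.2 (cover μ)) := by
  simp only [cover, Finset.biUnion_insert]
  ext v; simp

lemma matching_subset {μ ν : Finset (Fin N × Fin N)} (h : μ ⊆ ν)
    (hν : IsMatching ν) : IsMatching μ :=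
  ⟨fun p hp => hν.1 p (h hp), fun p hp q hq hpq => hν.2 p (h hp) q (h hq) hpq⟩

lemma pair_subset_cover {μ : Finset (Fin N × Fin N)} {p : Fin N × Fin N}
    (hp : p ∈ μ) : ({p.1, p.2} : Finset (Fin N)) ⊆ cover μ := by
  intro v hv; exact mem_cover.2 ⟨p, hp, by simpa using hv⟩

lemma matching_union {μ ν : Finset (Fin N × Fin N)} (hμ : IsMatching μ)
    (hν : IsMatching ν) (hd : Disjoint (cover μ) (cover ν)) :
    IsMatching (μ ∪ ν) := by
  constructor
  · intro p hp; rcases mem_union.1 hp with h | h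
    · exact hμ.1 p h
    · exact hν.1 p h
  · intro p hp q hq hpq
    rcases mem_union.1 hp with h1 | h1 <;> rcases mem_union.1 hq with h2 | h2
    · exact hμ.2 p h1 q h2 hpq
    · exact Finset.disjoint_iff_inter_eq_empty.1
        (hd.mono (pair_subset_cover h1) (pair_subset_cover h2))
    · exact Finset.disjoint_iff_inter_eq_empty.1
        ((hd.symm).mono (pair_subset_cover h1) (pair_subset_cover h2))
    · exact hν.2 p h1 q h2 hpq

lemma matching_vx_ne {μ : Finset (Fin N × Fin N)} (hμ : IsMatching μ)
    {p q : Fin N × Fin N} (hp : p ∈ μ) (hq : q ∈ μ) (hpq : p ≠ q) :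
    p.1 ≠ q.1 ∧ p.1 ≠ q.2 ∧ p.2 ≠ q.1 ∧ p.2 ≠ q.2 := by
  have h := hμ.2 p hp q hq hpq
  have h1 : ∀ v, v ∈ ({p.1, p.2} : Finset (Fin N)) → v ∈ ({q.1, q.2} : Finset (Fin N)) → False := by
    intro v hv hv'
    have : v ∈ ({p.1, p.2} ∩ {q.1, q.2} : Finset (Fin N)) := mem_inter.2 ⟨hv, hv'⟩
    simp [h] at this
  refine ⟨?_, ?_, ?_, ?_⟩ <;> intro hh
  · exact h1 p.1 (by simp) (by simp [hh])
  · exact h1 p.1 (by simp) (by simp [hh])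
  · exact h1 p.2 (by simp) (by simp [hh])
  · exact h1 p.2 (by simp) (by simp [hh])

lemma cover_erase {μ : Finset (Fin N × Fin N)} (hμ : IsMatching μ)
    {e : Fin N × Fin N} (he : e ∈ μ) :
    cover (μ.erase e) = cover μ \ {e.1, e.2} := by
  ext v
  simp only [mem_cover, mem_sdiff, mem_erase, mem_insert, mem_singleton]
  constructor
  · rintro ⟨q, ⟨hqe, hq⟩, hv⟩
    have h := matching_vx_ne hμ hq he hqe
    refine ⟨⟨q, hq, hv⟩, ?_⟩
    rcases hv with rfl | rfl <;> push_neg <;> tauto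
  · rintro ⟨⟨q, hq, hv⟩, hne⟩
    refine ⟨q, ⟨?_, hq⟩, hv⟩
    rintro rfl
    rcases hv with rfl | rfl <;> tauto

lemma card_pairset {p : Fin N × Fin N} (h : p.1 < p.2) :
    ({p.1, p.2} : Finset (Fin N)).card = 2 := by
  rw [card_insert_of_notMem (by simp [h.ne]), card_singleton]

lemma cover_card {μ : Finset (Fin N × Fin N)} (hμ : IsMatching μ) :
    (cover μ).card = 2 * μ.card := by
  rw [cover, card_biUnion]
  · rw [Finset.sum_congr rfl (fun p hp => card_pairset (hμ.1 p hp))]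
    simp [mul_comm]
  · intro p hp q hq hpq
    exact Finset.disjoint_iff_inter_eq_empty.2 (hμ.2 p hp q hq hpq)

instance {N : ℕ} (p q : Fin N × Fin N) : Decidable (cross p q) := by
  unfold cross; infer_instance

lemma crossings_eq_sum (μ : Finset (Fin N × Fin N)) :
    crossings μ = ∑ p ∈ μ, (μ.filter (fun q => cross p q)).card := by
  classical
  have h : ((μ ×ˢ μ).filter fun pq => pq.1.1 < pq.2.1 ∧ pq.2.1 < pq.1.2 ∧ pq.1.2 < pq.2.2)
      = μ.biUnion (fun p => (μ.filter (fun q => cross p q)).image (fun q => (p, q))) := by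
    ext ⟨a, b⟩
    simp only [mem_filter, Finset.mem_product, mem_biUnion, mem_image]; simp only [cross]
    aesop
  rw [crossings, h, card_biUnion]
  · exact Finset.sum_congr rfl fun p _ =>
      Finset.card_image_of_injective _ (fun x y hxy => by
        simpa using (Prod.mk.injEq .. ▸ hxy : (p, x) = (p, y)))
  · intro p hp q hq hpq
    simp only [Finset.disjoint_left, mem_image]
    rintro ⟨a, b⟩ ⟨x, _, hx⟩ ⟨y, _, hy⟩
    exact hpq ((Prod.mk.inj hx).1.trans (Prod.mk.inj hy).1.symm)

lemma crossings_insert {ν : Finset (Fin N × Fin N)} {e : Fin N × Fin N}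
    (he : e ∉ ν) :
    crossings (insert e ν) = crossings ν + (ν.filter (fun q => cross e q)).card
      + (ν.filter (fun q => cross q e)).card := by
  classical
  rw [crossings_eq_sum, Finset.sum_insert he, crossings_eq_sum]
  have h1 : (insert e ν).filter (fun q => cross e q) = ν.filter (fun q => cross e q) := by
    rw [filter_insert]
    have : ¬ cross e e := fun h => lt_irrefl _ h.1
    simp [this]
  have h2 : ∀ p ∈ ν, ((insert e ν).filter (fun q => cross p q)).card
      = (ν.filter (fun q => cross p q)).card + (if cross p e then 1 else 0) := by
    intro p hp
    rw [filter_insert]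
    by_cases h : cross p e
    · rw [if_pos h, if_pos h, card_insert_of_notMem (fun hh => he (mem_filter.1 hh).1)]
    · simp [h]
  rw [h1, Finset.sum_congr rfl h2, Finset.sum_add_distrib, Finset.sum_boole]
  push_cast
  omega

lemma cross_asymm {e q : Fin N × Fin N} (h : cross e q) : ¬ cross q e :=
  fun h' => lt_irrefl _ (h.1.trans h'.1)

lemma key_parity {μ : Finset (Fin N × Fin N)} (hμ : IsMatching μ)
    (hcov : cover μ = Finset.univ) {e : Fin N × Fin N} (he : e ∈ μ) :
    (((μ.erase e).filter (fun q => cross e q)).card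
      + ((μ.erase e).filter (fun q => cross q e)).card) % 2
      = ((e.2 : ℕ) - e.1 - 1) % 2 := by
  classical
  set ν := μ.erase e with hν
  set I : Finset (Fin N) := Finset.Ioo e.1 e.2 with hI
  have he12 : e.1 < e.2 := hμ.1 e he
  have hIsub : I = ν.biUnion (fun q => ({q.1, q.2} ∩ I)) := by
    ext v
    simp only [mem_biUnion, mem_inter, mem_insert, mem_singleton]
    constructor
    · intro hv
      have hv' : v ∈ cover μ := by rw [hcov]; exact mem_univ v
      rcases mem_cover.1 hv' with ⟨q, hq, hvq⟩
      have hqe : q ≠ e := by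
        rintro rfl
        have h1 := (Finset.mem_Ioo.1 hv).1
        have h2 := (Finset.mem_Ioo.1 hv).2
        rcases hvq with rfl | rfl
        · exact lt_irrefl _ h1
        · exact lt_irrefl _ h2
      exact ⟨q, Finset.mem_erase.2 ⟨hqe, hq⟩, by tauto⟩
    · rintro ⟨q, _, _, hv⟩; exact hv
  have hcard : I.card = ∑ q ∈ ν, ({q.1, q.2} ∩ I).card := by
    conv_lhs => rw [hIsub]
    rw [card_biUnion]
    intro p hp q hq hpq
    have h := hμ.2 p (Finset.mem_of_mem_erase hp) q (Finset.mem_of_mem_erase hq) hpq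
    rw [Function.onFun, Finset.disjoint_iff_inter_eq_empty]
    apply Finset.subset_empty.1
    intro v hv
    simp only [mem_inter] at hv
    rw [← h]
    exact mem_inter.2 ⟨hv.1.1, hv.2.1⟩
  have key : ∀ q ∈ ν, ({q.1, q.2} ∩ I).card % 2
      = (if cross e q ∨ cross q e then 1 else 0) % 2 := by
    intro q hq
    have hq2 : q ∈ μ := Finset.mem_of_mem_erase hq
    have hqe : q ≠ e := (Finset.mem_erase.1 hq).1
    have h12 : q.1 < q.2 := hμ.1 q hq2
    have hne := matching_vx_ne hμ hq2 he hqe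
    have hset : ({q.1, q.2} : Finset (Fin N)) ∩ I
        = ({q.1, q.2} : Finset (Fin N)).filter (fun v => v ∈ I) := by
      rw [Finset.filter_mem_eq_inter]
    rw [hset, Finset.filter_insert, Finset.filter_singleton]
    have hv12 : q.1 ≠ q.2 := ne_of_lt h12
    have c11 : (q.1 : ℕ) ≠ e.1 := fun h => hne.1 (Fin.val_injective h)
    have c12 : (q.1 : ℕ) ≠ e.2 := fun h => hne.2.1 (Fin.val_injective h)
    have c21 : (q.2 : ℕ) ≠ e.1 := fun h => hne.2.2.1 (Fin.val_injective h)
    have c22 : (q.2 : ℕ) ≠ e.2 := fun h => hne.2.2.2 (Fin.val_injective h)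
    have h12' : (q.1 : ℕ) < q.2 := h12
    have he12' : (e.1 : ℕ) < e.2 := he12
    have hIm1 : q.1 ∈ I ↔ ((e.1 : ℕ) < q.1 ∧ (q.1 : ℕ) < e.2) := by
      rw [hI, Finset.mem_Ioo]; exact Iff.rfl
    have hIm2 : q.2 ∈ I ↔ ((e.1 : ℕ) < q.2 ∧ (q.2 : ℕ) < e.2) := by
      rw [hI, Finset.mem_Ioo]; exact Iff.rfl
    by_cases m1 : (e.1 : ℕ) < q.1 ∧ (q.1 : ℕ) < e.2 <;>
      by_cases m2 : (e.1 : ℕ) < q.2 ∧ (q.2 : ℕ) < e.2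
    · rw [if_pos (hIm1.2 m1), if_pos (hIm2.2 m2)]
      have hc : ¬ (cross e q ∨ cross q e) := by
        simp only [cross, Fin.lt_def]; omega
      rw [if_neg hc, Finset.card_insert_of_notMem (by simp [hv12]), card_singleton]
    · rw [if_pos (hIm1.2 m1), if_neg (fun h => m2 (hIm2.1 h))]
      have hc : cross e q ∨ cross q e := by
        simp only [cross, Fin.lt_def]; omega
      rw [if_pos hc]; simp
    · rw [if_neg (fun h => m1 (hIm1.1 h)), if_pos (hIm2.2 m2)]
      have hc : cross e q ∨ cross q e := by
        simp only [cross, Fin.lt_def]; omega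
      rw [if_pos hc, card_singleton]
    · rw [if_neg (fun h => m1 (hIm1.1 h)), if_neg (fun h => m2 (hIm2.1 h))]
      have hc : ¬ (cross e q ∨ cross q e) := by
        simp only [cross, Fin.lt_def]; omega
      rw [if_neg hc, card_empty]
  have hcrossdisj : Disjoint (ν.filter (fun q => cross e q)) (ν.filter (fun q => cross q e)) := by
    rw [Finset.disjoint_left]
    intro q hq1 hq2
    exact cross_asymm (Finset.mem_filter.1 hq1).2 (Finset.mem_filter.1 hq2).2
  have hsplit : (ν.filter (fun q => cross e q)).card + (ν.filter (fun q => cross q e)).card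
      = (ν.filter (fun q => cross e q ∨ cross q e)).card := by
    rw [Finset.filter_or, Finset.card_union_of_disjoint hcrossdisj]
  rw [hsplit]
  have hIoo : I.card = (e.2 : ℕ) - e.1 - 1 := Fin.card_Ioo e.1 e.2
  rw [Finset.card_filter, ← hIoo, hcard]
  conv_lhs => rw [Finset.sum_nat_mod, Finset.sum_congr rfl (fun q hq => (key q hq).symm),
    ← Finset.sum_nat_mod]

lemma matching_empty : IsMatching (∅ : Finset (Fin N × Fin N)) :=
  ⟨fun p hp => absurd hp (Finset.notMem_empty p), fun p hp => absurd hp (Finset.notMem_empty p)⟩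

lemma cover_eq_empty {μ : Finset (Fin N × Fin N)} (h : cover μ = ∅) : μ = ∅ := by
  rcases Finset.eq_empty_or_nonempty μ with h' | ⟨p, hp⟩
  · exact h'
  · exfalso
    have : p.1 ∈ cover μ := mem_cover.2 ⟨p, hp, Or.inl rfl⟩
    simp [h] at this

open scoped Classical in
lemma mpf_empty {R : Type*} [CommRing R] (A : Matrix (Fin N) (Fin N) R) :
    mpf A (∅ : Finset (Fin N)) = 1 := by
  rw [mpf]
  have h : (Finset.univ.filter
      (fun μ : Finset (Fin N × Fin N) => IsMatching μ ∧ cover μ = ∅)) = {∅} := by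
    ext μ
    simp only [mem_filter, mem_univ, true_and, mem_singleton]
    constructor
    · rintro ⟨_, h2⟩; exact cover_eq_empty h2
    · rintro rfl; exact ⟨matching_empty, by simp [cover]⟩
  rw [h, Finset.sum_singleton]
  simp [crossings]

lemma posSum_univ_eq (Y : Finset (Fin N)) :
    posSum Finset.univ Y = ∑ y ∈ Y, ((y : ℕ) + 1) := by
  unfold posSum
  refine Finset.sum_congr rfl fun y _ => ?_
  have : (Finset.univ.filter fun z => z ≤ y) = Finset.Iic y := by
    ext z; simp
  rw [this, Fin.card_Iic]

lemma neg_one_pow_add_eq_zero {R : Type*} [CommRing R] {a b : ℕ} (h : (a + b) % 2 = 1) :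
    (-1 : R) ^ a + (-1 : R) ^ b = 0 := by
  rcases Nat.even_or_odd a with ha | ha
  · have hb : Odd b := by rw [Nat.odd_iff]; rcases Nat.even_iff.1 ha with h'; omega
    rw [Even.neg_one_pow ha, Odd.neg_one_pow hb]; ring
  · have hb : Even b := by rw [Nat.even_iff]; rcases Nat.odd_iff.1 ha with h'; omega
    rw [Odd.neg_one_pow ha, Even.neg_one_pow hb]; ring

lemma edge_disjoint {μ₁ μ₂ : Finset (Fin N × Fin N)}
    (hd : Disjoint (cover μ₁) (cover μ₂)) : Disjoint μ₁ μ₂ := by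
  rw [Finset.disjoint_left]
  intro q h1 h2
  exact (Finset.disjoint_left.1 hd) (mem_cover.2 ⟨q, h1, Or.inl rfl⟩)
    (mem_cover.2 ⟨q, h2, Or.inl rfl⟩)

noncomputable def FF {R : Type*} [CommRing R] (A : Matrix (Fin N) (Fin N) R)
    (p : Finset (Fin N × Fin N) × Finset (Fin N × Fin N)) : R :=
  (-1 : R) ^ (posSum Finset.univ (cover p.2)) *
    (((-1 : R) ^ (crossings p.1) * ∏ q ∈ p.1, A q.1 q.2) *
     ((-1 : R) ^ (crossings p.2) * ∏ q ∈ p.2, A q.1 q.2))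

lemma FF_toggle {R : Type*} [CommRing R] {A : Matrix (Fin N) (Fin N) R}
    {μ₁ μ₂ : Finset (Fin N × Fin N)} (h1 : IsMatching μ₁) (h2 : IsMatching μ₂)
    (hd : Disjoint (cover μ₁) (cover μ₂)) (hu : cover μ₁ ∪ cover μ₂ = Finset.univ)
    {e : Fin N × Fin N} (he2 : e ∈ μ₂) :
    FF A (μ₁, μ₂) + FF A (insert e μ₁, μ₂.erase e) = 0 := by
  classical
  have heμ1 : e ∉ μ₁ := fun h =>
    (Finset.disjoint_left.1 hd) (mem_cover.2 ⟨e, h, Or.inl rfl⟩)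
      (mem_cover.2 ⟨e, he2, Or.inl rfl⟩)
  set μ₂' := μ₂.erase e with hμ₂'
  have hins2 : insert e μ₂' = μ₂ := Finset.insert_erase he2
  have hne2' : e ∉ μ₂' := Finset.notMem_erase e μ₂
  have hμ : IsMatching (μ₁ ∪ μ₂) := matching_union h1 h2 hd
  have hcov : cover (μ₁ ∪ μ₂) = Finset.univ := by rw [cover_union, hu]
  have heμ : e ∈ μ₁ ∪ μ₂ := Finset.mem_union_right _ he2
  have he12 : e.1 < e.2 := hμ.1 e heμ
  have herase : (μ₁ ∪ μ₂).erase e = μ₁ ∪ μ₂' := by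
    rw [Finset.erase_union_distrib, Finset.erase_eq_of_notMem heμ1]
  have hd12' : Disjoint μ₁ μ₂' :=
    (edge_disjoint hd).mono_right (Finset.erase_subset e μ₂)
  have hcr1 : crossings (insert e μ₁) = crossings μ₁
      + (μ₁.filter (fun q => cross e q)).card + (μ₁.filter (fun q => cross q e)).card :=
    crossings_insert heμ1
  have hcr2 : crossings μ₂ = crossings μ₂'
      + (μ₂'.filter (fun q => cross e q)).card + (μ₂'.filter (fun q => cross q e)).card := by
    have := crossings_insert (ν := μ₂') (e := e) hne2'
    rwa [hins2] at this
  have hX : (((μ₁ ∪ μ₂).erase e).filter (fun q => cross e q)).card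
      + (((μ₁ ∪ μ₂).erase e).filter (fun q => cross q e)).card
      = ((μ₁.filter (fun q => cross e q)).card + (μ₂'.filter (fun q => cross e q)).card)
      + ((μ₁.filter (fun q => cross q e)).card + (μ₂'.filter (fun q => cross q e)).card) := by
    rw [herase, Finset.filter_union, Finset.filter_union,
      Finset.card_union_of_disjoint (Finset.disjoint_filter_filter hd12'),
      Finset.card_union_of_disjoint (Finset.disjoint_filter_filter hd12')]
  have hpar := key_parity hμ hcov heμ
  rw [hX] at hpar
  -- posSum
  have hcov2' : cover μ₂' = cover μ₂ \ {e.1, e.2} := cover_erase h2 he2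
  have hcove2 : cover μ₂ = insert e.1 (insert e.2 (cover μ₂')) := by
    conv_lhs => rw [← hins2]
    rw [cover_insert]
  have hm2 : e.2 ∉ cover μ₂' := by rw [hcov2']; simp
  have hm1 : e.1 ∉ insert e.2 (cover μ₂') := by
    rw [hcov2']; simp [ne_of_lt he12]
  have hps : posSum Finset.univ (cover μ₂)
      = ((e.1 : ℕ) + 1) + (((e.2 : ℕ) + 1) + posSum Finset.univ (cover μ₂')) := by
    rw [posSum_univ_eq, hcove2, Finset.sum_insert hm1, Finset.sum_insert hm2, ← posSum_univ_eq]
  have hp2 : (∏ q ∈ μ₂, A q.1 q.2) = A e.1 e.2 * ∏ q ∈ μ₂', A q.1 q.2 := by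
    conv_lhs => rw [← hins2]
    rw [Finset.prod_insert hne2']
  have hp1 : (∏ q ∈ insert e μ₁, A q.1 q.2) = A e.1 e.2 * ∏ q ∈ μ₁, A q.1 q.2 :=
    Finset.prod_insert heμ1
  -- abbreviations
  set a := (e.1 : ℕ) with ha
  set b := (e.2 : ℕ) with hb
  set c1 := crossings μ₁
  set c2 := crossings μ₂'
  set s := posSum Finset.univ (cover μ₂')
  set X1 := (μ₁.filter (fun q => cross e q)).card + (μ₁.filter (fun q => cross q e)).card
  set X2 := (μ₂'.filter (fun q => cross e q)).card + (μ₂'.filter (fun q => cross q e)).card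
  have hab : a < b := he12
  have hparity : ((a + 1 + (b + 1 + s) + c1 + (c2 + X2)) + (s + (c1 + X1) + c2)) % 2 = 1 := by
    omega
  have hsign : (-1 : R) ^ (a + 1 + (b + 1 + s)) * ((-1 : R) ^ c1 * (-1 : R) ^ (c2 + X2))
      + (-1 : R) ^ s * ((-1 : R) ^ (c1 + X1) * (-1 : R) ^ c2) = 0 := by
    rw [← pow_add, ← pow_add, ← pow_add, ← pow_add]
    exact neg_one_pow_add_eq_zero (by omega)
  unfold FF
  simp only
  rw [hcr1, hcr2, hps, hp1, hp2]
  have hX1 : crossings μ₁ + (μ₁.filter (fun q => cross e q)).card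
      + (μ₁.filter (fun q => cross q e)).card = c1 + X1 := by omega
  have hX2 : crossings μ₂' + (μ₂'.filter (fun q => cross e q)).card
      + (μ₂'.filter (fun q => cross q e)).card = c2 + X2 := by omega
  rw [hX1, hX2]
  linear_combination ((∏ q ∈ μ₁, A q.1 q.2) * (∏ q ∈ μ₂', A q.1 q.2) * A e.1 e.2) * hsign

lemma matching_inter_pairwise {μ : Finset (Fin N × Fin N)} (hμ : IsMatching μ)
    (S : Finset (Fin N)) : ∀ p ∈ μ, ∀ q ∈ μ, p ≠ q →
      Disjoint (({p.1, p.2} : Finset (Fin N)) ∩ S) (({q.1, q.2} : Finset (Fin N)) ∩ S) := by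
  intro p hp q hq hpq
  have h := hμ.2 p hp q hq hpq
  rw [Finset.disjoint_left]
  intro v hv hv'
  simp only [mem_inter] at hv hv'
  have : v ∈ ({p.1, p.2} ∩ {q.1, q.2} : Finset (Fin N)) := mem_inter.2 ⟨hv.1, hv'.1⟩
  simp [h] at this

lemma exists_BB_edge {A₀ B : Finset (Fin N)} (hdisj : Disjoint A₀ B)
    (hunion : A₀ ∪ B = Finset.univ) (hmn : A₀.card < B.card)
    {μ : Finset (Fin N × Fin N)} (hμ : IsMatching μ) (hcov : cover μ = Finset.univ) :
    (μ.filter (fun q => q.1 ∈ B ∧ q.2 ∈ B)).Nonempty := by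
  classical
  by_contra hcon
  rw [Finset.not_nonempty_iff_eq_empty, Finset.filter_eq_empty_iff] at hcon
  have hmemA : ∀ v : Fin N, v ∉ B → v ∈ A₀ := by
    intro v hv
    have : v ∈ A₀ ∪ B := by rw [hunion]; exact mem_univ v
    rcases Finset.mem_union.1 this with h | h
    · exact h
    · exact absurd h hv
  have hsub : ∀ S : Finset (Fin N), S ⊆ Finset.univ →
      S.card = ∑ q ∈ μ, (({q.1, q.2} : Finset (Fin N)) ∩ S).card := by
    intro S _
    have hS : S = μ.biUnion (fun q => ({q.1, q.2} : Finset (Fin N)) ∩ S) := by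
      ext v
      simp only [mem_biUnion, mem_inter]
      constructor
      · intro hv
        have : v ∈ cover μ := by rw [hcov]; exact mem_univ v
        rcases mem_cover.1 this with ⟨q, hq, hvq⟩
        exact ⟨q, hq, by simp [mem_insert]; tauto, hv⟩
      · rintro ⟨q, _, _, hv⟩; exact hv
    conv_lhs => rw [hS]
    exact card_biUnion (matching_inter_pairwise hμ S)
  have hBcard := hsub B (Finset.subset_univ B)
  have hAcard := hsub A₀ (Finset.subset_univ A₀)
  have hBle : B.card ≤ μ.card := by
    rw [hBcard, Finset.card_eq_sum_ones μ]
    apply Finset.sum_le_sum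
    intro q hq
    apply Finset.card_le_one.2
    intro a ha b hb
    simp only [mem_inter, mem_insert, mem_singleton] at ha hb
    rcases ha.1 with rfl | rfl <;> rcases hb.1 with rfl | rfl
    · rfl
    · exact absurd ⟨ha.2, hb.2⟩ (hcon hq)
    · exact absurd ⟨hb.2, ha.2⟩ (hcon hq)
    · rfl
  have hAle : μ.card ≤ A₀.card := by
    rw [hAcard, Finset.card_eq_sum_ones μ]
    apply Finset.sum_le_sum
    intro q hq
    rw [Nat.succ_le_iff, Finset.card_pos]
    have := hcon hq
    by_cases h1 : q.1 ∈ B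
    · have h2 : q.2 ∉ B := fun h => this ⟨h1, h⟩
      exact ⟨q.2, mem_inter.2 ⟨by simp, hmemA _ h2⟩⟩
    · exact ⟨q.1, mem_inter.2 ⟨by simp, hmemA _ h1⟩⟩
  omega

noncomputable def pick (E : Finset (Fin N × Fin N)) (h : E.Nonempty) : Fin N × Fin N :=
  h.choose

lemma pick_mem (E : Finset (Fin N × Fin N)) (h : E.Nonempty) : pick E h ∈ E :=
  h.choose_spec

lemma pick_congr {E E' : Finset (Fin N × Fin N)} (hEE : E = E') (h : E.Nonempty)
    (h' : E'.Nonempty) : pick E h = pick E' h' := by subst hEE; rfl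

lemma Q_toggle {A₀ B : Finset (Fin N)} {μ₁ μ₂ : Finset (Fin N × Fin N)}
    (h1 : IsMatching μ₁) (h2 : IsMatching μ₂) (hA : A₀ ⊆ cover μ₁) (hB : cover μ₂ ⊆ B)
    (hd : Disjoint (cover μ₁) (cover μ₂)) (hu : cover μ₁ ∪ cover μ₂ = Finset.univ)
    {e : Fin N × Fin N} (he2 : e ∈ μ₂) :
    IsMatching (insert e μ₁) ∧ IsMatching (μ₂.erase e) ∧ A₀ ⊆ cover (insert e μ₁) ∧
      cover (μ₂.erase e) ⊆ B ∧ Disjoint (cover (insert e μ₁)) (cover (μ₂.erase e)) ∧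
      cover (insert e μ₁) ∪ cover (μ₂.erase e) = Finset.univ := by
  have hμ : IsMatching (μ₁ ∪ μ₂) := matching_union h1 h2 hd
  have hsub : insert e μ₁ ⊆ μ₁ ∪ μ₂ := by
    intro q hq
    rcases Finset.mem_insert.1 hq with rfl | hq
    · exact Finset.mem_union_right _ he2
    · exact Finset.mem_union_left _ hq
  refine ⟨matching_subset hsub hμ, matching_subset (Finset.erase_subset e μ₂) h2, ?_, ?_, ?_, ?_⟩
  · refine hA.trans ?_
    rw [cover_insert]
    intro v hv; simp [hv]
  · rw [cover_erase h2 he2]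
    exact Finset.sdiff_subset.trans hB
  · rw [cover_insert, cover_erase h2 he2, Finset.disjoint_left]
    intro v hv hv'
    simp only [mem_insert, mem_sdiff, mem_singleton] at hv hv'
    rcases hv with rfl | rfl | hv
    · exact hv'.2 (Or.inl rfl)
    · exact hv'.2 (Or.inr rfl)
    · exact Finset.disjoint_left.1 hd hv hv'.1
  · rw [cover_insert, cover_erase h2 he2]
    apply Finset.eq_univ_of_forall
    intro v
    have hv : v ∈ cover μ₁ ∪ cover μ₂ := by rw [hu]; exact mem_univ v
    simp only [mem_union, mem_insert, mem_sdiff, mem_singleton] at hv ⊢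
    tauto

lemma Q_toggle' {A₀ B : Finset (Fin N)} (hdisj : Disjoint A₀ B)
    {μ₁ μ₂ : Finset (Fin N × Fin N)}
    (h1 : IsMatching μ₁) (h2 : IsMatching μ₂) (hA : A₀ ⊆ cover μ₁) (hB : cover μ₂ ⊆ B)
    (hd : Disjoint (cover μ₁) (cover μ₂)) (hu : cover μ₁ ∪ cover μ₂ = Finset.univ)
    {e : Fin N × Fin N} (heB1 : e.1 ∈ B) (heB2 : e.2 ∈ B) (he1 : e ∈ μ₁) :
    IsMatching (μ₁.erase e) ∧ IsMatching (insert e μ₂) ∧ A₀ ⊆ cover (μ₁.erase e) ∧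
      cover (insert e μ₂) ⊆ B ∧ Disjoint (cover (μ₁.erase e)) (cover (insert e μ₂)) ∧
      cover (μ₁.erase e) ∪ cover (insert e μ₂) = Finset.univ := by
  have hμ : IsMatching (μ₁ ∪ μ₂) := matching_union h1 h2 hd
  have hsub : insert e μ₂ ⊆ μ₁ ∪ μ₂ := by
    intro q hq
    rcases Finset.mem_insert.1 hq with rfl | hq
    · exact Finset.mem_union_left _ he1
    · exact Finset.mem_union_right _ hq
  refine ⟨matching_subset (Finset.erase_subset e μ₁) h1, matching_subset hsub hμ, ?_, ?_, ?_, ?_⟩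
  · rw [cover_erase h1 he1]
    intro v hv
    rw [Finset.mem_sdiff]
    refine ⟨hA hv, ?_⟩
    simp only [mem_insert, mem_singleton]
    rintro (rfl | rfl)
    · exact Finset.disjoint_left.1 hdisj hv heB1
    · exact Finset.disjoint_left.1 hdisj hv heB2
  · rw [cover_insert]
    intro v hv
    simp only [mem_insert] at hv
    rcases hv with rfl | rfl | hv
    · exact heB1
    · exact heB2
    · exact hB hv
  · rw [cover_insert, cover_erase h1 he1, Finset.disjoint_left]
    intro v hv hv'
    simp only [mem_insert, mem_sdiff, mem_singleton] at hv hv'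
    rcases hv' with rfl | rfl | hv'
    · exact hv.2 (Or.inl rfl)
    · exact hv.2 (Or.inr rfl)
    · exact Finset.disjoint_left.1 hd hv.1 hv'
  · rw [cover_insert, cover_erase h1 he1]
    apply Finset.eq_univ_of_forall
    intro v
    have hv : v ∈ cover μ₁ ∪ cover μ₂ := by rw [hu]; exact mem_univ v
    simp only [mem_union, mem_insert, mem_sdiff, mem_singleton] at hv ⊢
    tauto

noncomputable def tog (B : Finset (Fin N)) (p : Finset (Fin N × Fin N) × Finset (Fin N × Fin N)) :
    Finset (Fin N × Fin N) × Finset (Fin N × Fin N) :=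
  if h : ((p.1 ∪ p.2).filter (fun q => q.1 ∈ B ∧ q.2 ∈ B)).Nonempty then
    (if pick _ h ∈ p.2 then (insert (pick _ h) p.1, p.2.erase (pick _ h))
      else (p.1.erase (pick _ h), insert (pick _ h) p.2))
  else p

open scoped Classical in
lemma sum_FF_zero {R : Type*} [CommRing R] (A : Matrix (Fin N) (Fin N) R)
    (A₀ B : Finset (Fin N)) (hdisj : Disjoint A₀ B) (hunion : A₀ ∪ B = Finset.univ)
    (hmn : A₀.card < B.card) :
    ∑ p ∈ Finset.univ.filter
      (fun p : Finset (Fin N × Fin N) × Finset (Fin N × Fin N) =>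
        IsMatching p.1 ∧ IsMatching p.2 ∧ A₀ ⊆ cover p.1 ∧ cover p.2 ⊆ B ∧
        Disjoint (cover p.1) (cover p.2) ∧ cover p.1 ∪ cover p.2 = Finset.univ),
      FF A p = 0 := by
  have hNE : ∀ p ∈ Finset.univ.filter
      (fun p : Finset (Fin N × Fin N) × Finset (Fin N × Fin N) =>
        IsMatching p.1 ∧ IsMatching p.2 ∧ A₀ ⊆ cover p.1 ∧ cover p.2 ⊆ B ∧
        Disjoint (cover p.1) (cover p.2) ∧ cover p.1 ∪ cover p.2 = Finset.univ),
      (((p.1 ∪ p.2).filter (fun q => q.1 ∈ B ∧ q.2 ∈ B))).Nonempty := by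
    intro p hp
    obtain ⟨h1, h2, hA, hB, hd, hu⟩ := (Finset.mem_filter.1 hp).2
    exact exists_BB_edge hdisj hunion hmn (matching_union h1 h2 hd)
      (by rw [cover_union, hu])
  refine Finset.sum_involution (fun p _ => tog B p) ?_ ?_ ?_ ?_
  · -- sign cancellation
    intro p hp
    obtain ⟨h1, h2, hA, hB, hd, hu⟩ := (Finset.mem_filter.1 hp).2
    have hne := hNE p hp
    obtain ⟨heμ, heB1, heB2⟩ := Finset.mem_filter.1 (pick_mem _ hne)
    simp only [tog, dif_pos hne]
    by_cases hc : pick _ hne ∈ p.2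
    · rw [if_pos hc]
      exact FF_toggle h1 h2 hd hu hc
    · rw [if_neg hc]
      have he1 : pick _ hne ∈ p.1 := (Finset.mem_union.1 heμ).resolve_right hc
      obtain ⟨h1', h2', hA', hB', hd', hu'⟩ :=
        Q_toggle' hdisj h1 h2 hA hB hd hu heB1 heB2 he1
      have htog := FF_toggle (A := A) h1' h2' hd' hu' (Finset.mem_insert_self _ p.2)
      rw [Finset.insert_erase he1, Finset.erase_insert hc] at htog
      rw [add_comm]
      exact htog
  · -- g ≠ id
    intro p hp _
    have hne := hNE p hp
    intro hcontra
    simp only [tog, dif_pos hne] at hcontra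
    by_cases hc : pick _ hne ∈ p.2
    · rw [if_pos hc] at hcontra
      exact (Finset.erase_eq_self.1 (congrArg Prod.snd hcontra)) hc
    · rw [if_neg hc] at hcontra
      exact hc (Finset.insert_eq_self.1 (congrArg Prod.snd hcontra))
  · -- membership
    intro p hp
    obtain ⟨h1, h2, hA, hB, hd, hu⟩ := (Finset.mem_filter.1 hp).2
    have hne := hNE p hp
    obtain ⟨heμ, heB1, heB2⟩ := Finset.mem_filter.1 (pick_mem _ hne)
    simp only [tog, dif_pos hne]
    by_cases hc : pick _ hne ∈ p.2
    · rw [if_pos hc]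
      exact Finset.mem_filter.2 ⟨Finset.mem_univ _, Q_toggle h1 h2 hA hB hd hu hc⟩
    · rw [if_neg hc]
      have he1 : pick _ hne ∈ p.1 := (Finset.mem_union.1 heμ).resolve_right hc
      exact Finset.mem_filter.2 ⟨Finset.mem_univ _,
        Q_toggle' hdisj h1 h2 hA hB hd hu heB1 heB2 he1⟩
  · -- involutive
    intro p hp
    obtain ⟨h1, h2, hA, hB, hd, hu⟩ := (Finset.mem_filter.1 hp).2
    have hne := hNE p hp
    obtain ⟨heμ, heB1, heB2⟩ := Finset.mem_filter.1 (pick_mem _ hne)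
    try simp only []
    by_cases hc : pick _ hne ∈ p.2
    · have he1 : pick _ hne ∉ p.1 := fun h => Finset.disjoint_left.1 hd
        (mem_cover.2 ⟨_, h, Or.inl rfl⟩) (mem_cover.2 ⟨_, hc, Or.inl rfl⟩)
      have htogp : tog B p = (insert (pick _ hne) p.1, p.2.erase (pick _ hne)) := by
        simp only [tog, dif_pos hne]
        rw [if_pos hc]
      rw [htogp]
      have huni : insert (pick _ hne) p.1 ∪ p.2.erase (pick _ hne) = p.1 ∪ p.2 := by
        ext q
        by_cases hq : q = pick _ hne
        · subst hq
          simp [Finset.mem_union, hc]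
        · simp [Finset.mem_union, hq]
      have hfil : ((insert (pick _ hne) p.1 ∪ p.2.erase (pick _ hne)).filter
          (fun q => q.1 ∈ B ∧ q.2 ∈ B)) = ((p.1 ∪ p.2).filter (fun q => q.1 ∈ B ∧ q.2 ∈ B)) := by
        rw [huni]
      have hne' : ((insert (pick _ hne) p.1 ∪ p.2.erase (pick _ hne)).filter
          (fun q => q.1 ∈ B ∧ q.2 ∈ B)).Nonempty := by rw [hfil]; exact hne
      have hpick : pick _ hne' = pick _ hne := pick_congr hfil _ _
      simp only [tog, dif_pos hne']
      rw [hpick, if_neg (Finset.notMem_erase _ p.2), Finset.erase_insert he1,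
        Finset.insert_erase hc]
    · have he1 : pick _ hne ∈ p.1 := (Finset.mem_union.1 heμ).resolve_right hc
      have htogp : tog B p = (p.1.erase (pick _ hne), insert (pick _ hne) p.2) := by
        simp only [tog, dif_pos hne]
        rw [if_neg hc]
      rw [htogp]
      have huni : p.1.erase (pick _ hne) ∪ insert (pick _ hne) p.2 = p.1 ∪ p.2 := by
        ext q
        by_cases hq : q = pick _ hne
        · subst hq
          simp [Finset.mem_union, he1]
        · simp [Finset.mem_union, hq]
      have hfil : ((p.1.erase (pick _ hne) ∪ insert (pick _ hne) p.2).filter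
          (fun q => q.1 ∈ B ∧ q.2 ∈ B)) = ((p.1 ∪ p.2).filter (fun q => q.1 ∈ B ∧ q.2 ∈ B)) := by
        rw [huni]
      have hne' : ((p.1.erase (pick _ hne) ∪ insert (pick _ hne) p.2).filter
          (fun q => q.1 ∈ B ∧ q.2 ∈ B)).Nonempty := by rw [hfil]; exact hne
      have hpick : pick _ hne' = pick _ hne := pick_congr hfil _ _
      simp only [tog, dif_pos hne']
      rw [hpick, if_pos (Finset.mem_insert_self _ p.2), Finset.insert_erase he1,
        Finset.erase_insert hc]

open scoped Classical in
lemma sum_powerset_eq {R : Type*} [CommRing R] (A : Matrix (Fin N) (Fin N) R)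
    (A₀ B : Finset (Fin N)) (hdisj : Disjoint A₀ B) (hunion : A₀ ∪ B = Finset.univ) :
    ∑ X ∈ B.powerset,
        (-1 : R) ^ posSum Finset.univ (B \ X) * (mpf A (A₀ ∪ X) * mpf A (B \ X))
      = ∑ p ∈ Finset.univ.filter
          (fun p : Finset (Fin N × Fin N) × Finset (Fin N × Fin N) =>
            IsMatching p.1 ∧ IsMatching p.2 ∧ A₀ ⊆ cover p.1 ∧ cover p.2 ⊆ B ∧
            Disjoint (cover p.1) (cover p.2) ∧ cover p.1 ∪ cover p.2 = Finset.univ),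
          FF A p := by
  conv_rhs => rw [← Finset.sum_fiberwise_of_maps_to (g := fun p => B \ cover p.2)
    (t := B.powerset) (fun p _ => Finset.mem_powerset.2 Finset.sdiff_subset)]
  refine Finset.sum_congr rfl fun X hX => ?_
  have hXB : X ⊆ B := Finset.mem_powerset.1 hX
  have hset : (Finset.univ.filter
      (fun p : Finset (Fin N × Fin N) × Finset (Fin N × Fin N) =>
        IsMatching p.1 ∧ IsMatching p.2 ∧ A₀ ⊆ cover p.1 ∧ cover p.2 ⊆ B ∧
        Disjoint (cover p.1) (cover p.2) ∧ cover p.1 ∪ cover p.2 = Finset.univ)).filter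
        (fun p => B \ cover p.2 = X)
      = (Finset.univ.filter (fun μ : Finset (Fin N × Fin N) =>
          IsMatching μ ∧ cover μ = A₀ ∪ X)) ×ˢ
        (Finset.univ.filter (fun μ : Finset (Fin N × Fin N) =>
          IsMatching μ ∧ cover μ = B \ X)) := by
    ext p
    simp only [Finset.mem_filter, Finset.mem_product, Finset.mem_univ, true_and]
    constructor
    · rintro ⟨⟨h1, h2, hA, hB, hd, hu⟩, hg⟩
      have hc2 : cover p.2 = B \ X := by
        rw [← hg, Finset.sdiff_sdiff_eq_self hB]
      have hc1 : cover p.1 = A₀ ∪ X := by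
        ext v
        have hv2 : v ∈ A₀ ∪ B := by rw [hunion]; exact Finset.mem_univ v
        have hv3 : v ∈ cover p.1 ∪ cover p.2 := by rw [hu]; exact Finset.mem_univ v
        constructor
        · intro hv
          rcases Finset.mem_union.1 hv2 with hva | hvb
          · exact Finset.mem_union_left _ hva
          · refine Finset.mem_union_right _ ?_
            by_contra hvX
            have : v ∈ cover p.2 := by
              rw [hc2]; exact Finset.mem_sdiff.2 ⟨hvb, hvX⟩
            exact Finset.disjoint_left.1 hd hv this
        · intro hv
          rcases Finset.mem_union.1 hv with hva | hvX
          · exact hA hva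
          · have hnc2 : v ∉ cover p.2 := by
              rw [hc2, Finset.mem_sdiff]
              push_neg
              intro _; exact hvX
            rcases Finset.mem_union.1 hv3 with h | h
            · exact h
            · exact absurd h hnc2
      exact ⟨⟨h1, hc1⟩, ⟨h2, hc2⟩⟩
    · rintro ⟨⟨h1, hc1⟩, ⟨h2, hc2⟩⟩
      have hd' : Disjoint (cover p.1) (cover p.2) := by
        rw [hc1, hc2]
        refine Finset.disjoint_union_left.2 ⟨hdisj.mono_right Finset.sdiff_subset, ?_⟩
        exact disjoint_sdiff_self_right
      refine ⟨⟨h1, h2, ?_, ?_, hd', ?_⟩, ?_⟩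
      · rw [hc1]; exact Finset.subset_union_left
      · rw [hc2]; exact Finset.sdiff_subset
      · rw [hc1, hc2, ← hunion]
        ext v
        have hvXB : v ∈ X → v ∈ B := fun h => hXB h
        simp only [Finset.mem_union, Finset.mem_sdiff]
        tauto
      · rw [hc2, Finset.sdiff_sdiff_eq_self hXB]
  rw [hset, Finset.sum_product, mpf, mpf, Finset.sum_mul_sum, Finset.mul_sum]
  refine Finset.sum_congr rfl fun μ₁ h₁ => ?_
  rw [Finset.mul_sum]
  refine Finset.sum_congr rfl fun μ₂ h₂ => ?_
  obtain ⟨-, hc2⟩ := (Finset.mem_filter.1 h₂).2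
  unfold FF
  simp only
  rw [hc2]

end Aux

/-- **Srinivasan's expansion, case `m < n`.** With `V = Fin (m+n)` ordered,
partitioned into disjoint `A₀` (size `m`) and `B` (size `n`), `m < n`, `m + n` even:
`Pf(V) = −∑_{X ⊊ B} (−1)^{Σ(B\X,V)} Pf(A₀ ∪ X) Pf(B \ X)`. -/
theorem srinivasan_m_lt_n {N m n : ℕ} {R : Type*} [CommRing R]
    (A : Matrix (Fin N) (Fin N) R) (hA : ∀ i j, A i j = - A j i)
    (A₀ B : Finset (Fin N)) (hdisj : Disjoint A₀ B) (hunion : A₀ ∪ B = Finset.univ)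
    (hm : A₀.card = m) (hn : B.card = n) (hmn : m < n) (heven : Even (m + n)) :
    mpf A Finset.univ =
      - ∑ X ∈ B.powerset.filter (fun X => X ≠ B),
          (-1 : R) ^ posSum Finset.univ (B \ X) * (mpf A (A₀ ∪ X) * mpf A (B \ X)) := by
  classical
  have hmn' : A₀.card < B.card := by rw [hm, hn]; exact hmn
  have h0 : ∑ X ∈ B.powerset,
      (-1 : R) ^ posSum Finset.univ (B \ X) * (mpf A (A₀ ∪ X) * mpf A (B \ X)) = 0 := by
    rw [sum_powerset_eq A A₀ B hdisj hunion]
    exact sum_FF_zero A A₀ B hdisj hunion hmn'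
  have hsplit := Finset.sum_filter_add_sum_filter_not B.powerset (fun X => X ≠ B)
      (fun X => (-1 : R) ^ posSum Finset.univ (B \ X) * (mpf A (A₀ ∪ X) * mpf A (B \ X)))
  have hnotfil : B.powerset.filter (fun X => ¬ X ≠ B) = {B} := by
    ext X
    simp only [Finset.mem_filter, Finset.mem_powerset, Finset.mem_singleton, not_not]
    constructor
    · rintro ⟨-, h⟩; exact h
    · rintro rfl; exact ⟨subset_rfl, rfl⟩
  rw [hnotfil, Finset.sum_singleton] at hsplit
  have hBterm : (-1 : R) ^ posSum Finset.univ (B \ B) * (mpf A (A₀ ∪ B) * mpf A (B \ B))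
      = mpf A Finset.univ := by
    rw [Finset.sdiff_self, hunion, mpf_empty]
    simp [posSum]
  rw [hBterm] at hsplit
  have htot := hsplit.trans h0
  exact eq_neg_of_add_eq_zero_left ((add_comm _ _).trans htot)
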